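/- Let ν ∈ ℝ^{n+1} be a unit vector, θ ∈ (0,π), k ∈ (0,1], and let ν_θ = (cos θ, 0, …, 0, sin θ) ∈ ℝ^{n+1}. Then g²_{θ,k}(ν) := 1 - ν₁² - ν_{n+1}² + k(ν₁ - cos θ)² ≤ |ν - ν_θ|². -/

import Mathlib

open Real

theorem stmt_9 (n : ℕ) (hn : 2 ≤ n) (θ k : ℝ) (hθ : θ ∈ Set.Ioo 0 Real.pi)
    (hk : k ∈ Set.Ioc (0 : ℝ) 1)
    (ν : EuclideanSpace ℝ (Fin (n + 1))) (hν : ‖ν‖ = 1) :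
    1 - (ν 0) ^ 2 - (ν (Fin.last n)) ^ 2 + k * (ν 0 - Real.cos θ) ^ 2 ≤
      ‖ν - (EuclideanSpace.single 0 (Real.cos θ) +
        EuclideanSpace.single (Fin.last n) (Real.sin θ))‖ ^ 2 := by
  have hne : (Fin.last n) ≠ (0 : Fin (n + 1)) := by
    simp [Fin.ext_iff, Fin.last]; omega
  set w : EuclideanSpace ℝ (Fin (n + 1)) :=
    EuclideanSpace.single 0 (Real.cos θ) + EuclideanSpace.single (Fin.last n) (Real.sin θ)
  have hrhs : ‖ν - w‖ ^ 2 = ‖ν‖ ^ 2 - 2 * inner ℝ ν w + ‖w‖ ^ 2 := by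
    exact norm_sub_sq_real ν w
  have hiw : (inner ℝ ν w : ℝ) = Real.cos θ * ν 0 + Real.sin θ * ν (Fin.last n) := by
    simp [w, inner_add_right, EuclideanSpace.inner_single_right]
  have hw : ‖w‖ ^ 2 = 1 := by
    have : (inner ℝ w w : ℝ) = 1 := by
      simp only [w, inner_add_left, inner_add_right, EuclideanSpace.inner_single_right,
        EuclideanSpace.single_apply, hne, hne.symm, if_true, if_false, conj_trivial, mul_zero,
        add_zero, zero_add]
      nlinarith [Real.sin_sq_add_cos_sq θ]
    rw [← real_inner_self_eq_norm_sq]; exact this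
  rw [hrhs, hiw, hw, hν]
  nlinarith [sq_nonneg (Real.sin θ - ν (Fin.last n)), sq_nonneg (ν 0 - Real.cos θ), hk.2,
    Real.sin_sq_add_cos_sq θ]
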